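/- arXiv:1508.04050 — 2 statements merged into one kernel-verified Lean document; each statement's English description precedes it below -/
import Mathlib

section
/- Let n ∈ ℕ, m : Fin n → ℕ, p : (i : Fin n) → Fin (m i) → ℕ, and f ∈ Σ_n. Set P_i = ∑_j p_i(j) and let p♭ : Fin (∑ i, m i) → ℕ denote the flattened family of the p_i(j). Then δ_{∑ m; p♭}(δ_{n;m}(f)) = δ_{n;P}(f), both sides regarded as permutations of the same finite set via the canonical identification of the sum of the flattened family with ∑_i P_i. -/
/-- Splitting a sigma type over `Fin (n+1)` as first block plus the rest. -/
def sigmaFinSuccEquiv (n : ℕ) (β : Fin (n + 1) → Type*) :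
    ((i : Fin (n + 1)) × β i) ≃ β 0 ⊕ ((i : Fin n) × β i.succ) where
  toFun x := Fin.cases (motive := fun i => β i → β 0 ⊕ ((i : Fin n) × β i.succ))
    (fun b => Sum.inl b) (fun i b => Sum.inr ⟨i, b⟩) x.1 x.2
  invFun x := Sum.elim (fun b => ⟨0, b⟩) (fun p => ⟨p.1.succ, p.2⟩) x
  left_inv := by
    rintro ⟨i, b⟩
    induction i using Fin.cases <;> simp
  right_inv := by rintro (b | ⟨i, b⟩) <;> simp

/-- The canonical order-preserving equivalence `(Σ i : Fin n, Fin (k i)) ≃ Fin (∑ i, k i)`,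
putting the blocks in order. -/
def finSigmaFinEquiv' : ∀ {n : ℕ} {k : Fin n → ℕ}, ((i : Fin n) × Fin (k i)) ≃ Fin (∑ i, k i)
  | 0, k => (Equiv.equivOfIsEmpty _ (Fin 0)).trans (finCongr (Fin.sum_univ_zero k).symm)
  | n + 1, k =>
      ((sigmaFinSuccEquiv n fun i => Fin (k i)).trans
        ((Equiv.refl (Fin (k 0))).sumCongr (finSigmaFinEquiv' (k := fun i => k i.succ)))).trans
        (finSumFinEquiv.trans (finCongr (Fin.sum_univ_succ k).symm))

/-- The block sum `β_k(h₁, …, h_n)` of permutations `h i : Σ_{k i}`: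
on the sigma type it is `(i, j) ↦ (i, h i j)`. -/
def blockSum {n : ℕ} {k : Fin n → ℕ} (h : (i : Fin n) → Equiv.Perm (Fin (k i))) :
    Equiv.Perm (Fin (∑ i, k i)) :=
  finSigmaFinEquiv'.symm.trans ((Equiv.sigmaCongrRight h).trans finSigmaFinEquiv')

/-- The block permutation `δ_{n;k}(σ)`: on the sigma type it is `(i, j) ↦ (σ i, j)`,
regarded as a permutation of `Fin (∑ i, k i)` via `∑ i, k (σ⁻¹ i) = ∑ i, k i`. -/
def blockPerm {n : ℕ} (k : Fin n → ℕ) (σ : Equiv.Perm (Fin n)) :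
    Equiv.Perm (Fin (∑ i, k i)) :=
  finSigmaFinEquiv'.symm.trans
    ((Equiv.sigmaCongrLeft' (β := fun i => Fin (k i)) σ).trans
      (finSigmaFinEquiv'.trans (finCongr (Equiv.sum_comp σ.symm k))))

/-- Transport of permutations along an equality of cardinalities. -/
def permCast {a b : ℕ} (h : a = b) : Equiv.Perm (Fin a) ≃ Equiv.Perm (Fin b) :=
  (finCongr h).permCongr

/-- Flattening a doubly indexed family of sizes. -/
def flatten {n : ℕ} {k : Fin n → ℕ} (m : (i : Fin n) → Fin (k i) → ℕ) :
    Fin (∑ i, k i) → ℕ :=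
  fun y => m (finSigmaFinEquiv'.symm y).1 (finSigmaFinEquiv'.symm y).2

/-- The canonical identification of the double sum with the sum of the flattened family. -/
theorem sum_flatten {n : ℕ} {k : Fin n → ℕ} (m : (i : Fin n) → Fin (k i) → ℕ) :
    ∑ i, ∑ j, m i j = ∑ y, flatten m y := by
  rw [← Equiv.sum_comp (finSigmaFinEquiv' (k := k)) (flatten m),
    ← Finset.univ_sigma_univ, Finset.sum_sigma]
  exact Finset.sum_congr rfl fun a _ => Finset.sum_congr rfl fun s _ => by
    simp only [flatten]
    conv_rhs => rw [Equiv.symm_apply_apply]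



open Finset in
lemma finSigmaFinEquiv_val : ∀ {n : ℕ} {k : Fin n → ℕ} (i : Fin n) (j : Fin (k i)),
    ((finSigmaFinEquiv' ⟨i, j⟩ : Fin (∑ i, k i)) : ℕ) = (∑ l, if l < i then k l else 0) + j
  | 0, k, i, j => i.elim0
  | n + 1, k, i, j => by
    induction i using Fin.cases with
    | zero =>
      simp only [finSigmaFinEquiv', Equiv.trans_apply, sigmaFinSuccEquiv, Equiv.coe_fn_mk,
        Fin.cases_zero, Equiv.sumCongr_apply, Sum.map_inl, Equiv.refl_apply,
        finSumFinEquiv_apply_left, finCongr_apply, Fin.coe_cast, Fin.coe_castAdd]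
      have : ∀ l : Fin (n + 1), ¬ l < 0 := fun l => Fin.not_lt_zero l
      simp [this]
    | succ i =>
      simp only [finSigmaFinEquiv', Equiv.trans_apply, sigmaFinSuccEquiv, Equiv.coe_fn_mk,
        Fin.cases_succ, Equiv.sumCongr_apply, Sum.map_inr, finSumFinEquiv_apply_right,
        finCongr_apply, Fin.coe_cast, Fin.coe_natAdd]
      rw [finSigmaFinEquiv_val (k := fun l => k l.succ) i j, Fin.sum_univ_succ fun l : Fin (n + 1) => if l < i.succ then k l else 0]
      simp only [Fin.succ_lt_succ_iff, Fin.succ_pos, if_true]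
      ring


open Finset in
lemma sum_lt_add_le {n : ℕ} (k : Fin n → ℕ) {a a' : Fin n} (h : a < a') :
    (∑ l, if l < a then k l else 0) + k a ≤ ∑ l, if l < a' then k l else 0 := by
  have heq : (∑ l, if l < a then k l else 0) + k a
      = ∑ l, ((if l < a then k l else 0) + (if l = a then k l else 0)) := by
    rw [Finset.sum_add_distrib, Finset.sum_ite_eq' Finset.univ a k]
    simp
  rw [heq]
  apply Finset.sum_le_sum
  intro l _
  rcases eq_or_ne l a with rfl | hne
  · simp [lt_irrefl, h]
  · by_cases hl : l < a
    · simp [hne, hl, lt_trans hl h]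
    · simp [hne, hl]

open Finset in
lemma S_lex {n : ℕ} (k : Fin n → ℕ) {a a' : Fin n} {b b' : ℕ}
    (hb : b < k a) (hb' : b' < k a') :
    (∑ l, if l < a then k l else 0) + b < (∑ l, if l < a' then k l else 0) + b'
      ↔ a < a' ∨ (a = a' ∧ b < b') := by
  constructor
  · intro h
    rcases lt_trichotomy a a' with hlt | rfl | hgt
    · exact Or.inl hlt
    · exact Or.inr ⟨rfl, by omega⟩
    · exfalso
      have := sum_lt_add_le k hgt
      omega
  · rintro (hlt | ⟨rfl, hbb⟩)
    · have := sum_lt_add_le k hlt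
      omega
    · omega

lemma sigmaCongrLeft'_mk {n : ℕ} {k : Fin n → ℕ} (σ : Equiv.Perm (Fin n))
    (i : Fin n) (j : Fin (k i)) :
    Equiv.sigmaCongrLeft' (β := fun i => Fin (k i)) σ ⟨i, j⟩
      = ⟨σ i, Fin.cast (by rw [σ.symm_apply_apply]) j⟩ := by
  rw [Equiv.sigmaCongrLeft', Equiv.symm_apply_eq, Equiv.sigmaCongrLeft_apply]
  refine Sigma.ext ?_ ?_
  · exact (σ.symm_apply_apply i).symm
  · refine (Fin.heq_ext_iff ?_).mpr ?_
    · show k i = k (σ.symm (σ i))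
      rw [σ.symm_apply_apply]
    · simp

open Finset in
lemma blockPerm_val {n : ℕ} (k : Fin n → ℕ) (σ : Equiv.Perm (Fin n))
    (i : Fin n) (j : Fin (k i)) :
    ((blockPerm k σ (finSigmaFinEquiv' ⟨i, j⟩)) : ℕ)
      = (∑ l, if l < σ i then k (σ.symm l) else 0) + j := by
  simp only [blockPerm, Equiv.trans_apply, Equiv.symm_apply_apply, sigmaCongrLeft'_mk,
    finCongr_apply, Fin.coe_cast]
  rw [finSigmaFinEquiv_val (k := fun l => k (σ.symm l))]
  simp

open Finset in
lemma sum_sigma_decomp {n : ℕ} {m : Fin n → ℕ} (g : Fin (∑ i, m i) → ℕ)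
    (cond : Fin (∑ i, m i) → Prop) [DecidablePred cond]
    (Q : Fin n → Prop) [DecidablePred Q] (i : Fin n) (c : ℕ) (hQ : ¬ Q i)
    (hcond : ∀ (a : Fin n) (b : Fin (m a)),
      cond (finSigmaFinEquiv' ⟨a, b⟩) ↔ (Q a ∨ (a = i ∧ (b : ℕ) < c))) :
    ∑ y, (if cond y then g y else 0)
      = (∑ a, if Q a then (∑ b, g (finSigmaFinEquiv' ⟨a, b⟩)) else 0)
        + ∑ b : Fin (m i), if (b : ℕ) < c then g (finSigmaFinEquiv' ⟨i, b⟩) else 0 := by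
  rw [← Equiv.sum_comp (finSigmaFinEquiv' (k := m)) (fun y => if cond y then g y else 0),
    ← Finset.univ_sigma_univ, Finset.sum_sigma]
  have key : ∀ (a : Fin n) (b : Fin (m a)),
      (if cond (finSigmaFinEquiv' ⟨a, b⟩) then g (finSigmaFinEquiv' ⟨a, b⟩) else 0)
      = (if Q a then g (finSigmaFinEquiv' ⟨a, b⟩) else 0)
        + (if a = i ∧ (b : ℕ) < c then g (finSigmaFinEquiv' ⟨a, b⟩) else 0) := by
    intro a b
    simp only [hcond]
    by_cases h2 : a = i ∧ (b : ℕ) < c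
    · obtain ⟨rfl, hb⟩ := h2
      simp [hQ, hb]
    · by_cases h1 : Q a <;> simp [h1, h2]
  rw [Finset.sum_congr rfl (fun a _ => Finset.sum_congr rfl (fun b _ => key a b))]
  simp only [Finset.sum_add_distrib]
  congr 1
  · exact Finset.sum_congr rfl fun a _ => by split <;> simp
  · rw [Finset.sum_eq_single_of_mem i (Finset.mem_univ i)]
    · simp
    · intro a _ ha
      simp [ha]


theorem blockPerm_blockPerm {n : ℕ} (m : Fin n → ℕ)
    (p : (i : Fin n) → Fin (m i) → ℕ) (f : Equiv.Perm (Fin n)) :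
    blockPerm (flatten p) (blockPerm m f) =
      permCast (sum_flatten p) (blockPerm (fun i => ∑ j, p i j) f) := by
  have hval : ∀ (a : Fin n) (b : Fin (m a)), flatten p (finSigmaFinEquiv' ⟨a, b⟩) = p a b := by
    intro a b
    have h : finSigmaFinEquiv'.symm (finSigmaFinEquiv' ⟨a, b⟩) = ⟨a, b⟩ :=
      Equiv.symm_apply_apply _ _
    simp only [flatten]
    rw [h]
  apply Equiv.ext
  intro x
  obtain ⟨⟨y, t⟩, rfl⟩ := finSigmaFinEquiv'.surjective x
  obtain ⟨⟨i, j⟩, rfl⟩ := finSigmaFinEquiv'.surjective y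
  have ht : (t : ℕ) < p i j := by
    exact lt_of_lt_of_le t.isLt (le_of_eq (hval i j))
  have hcondL : ∀ (a : Fin n) (b : Fin (m a)),
      blockPerm m f (finSigmaFinEquiv' ⟨a, b⟩) < blockPerm m f (finSigmaFinEquiv' ⟨i, j⟩)
        ↔ ((f a < f i) ∨ (a = i ∧ (b : ℕ) < (j : ℕ))) := by
    intro a b
    rw [Fin.lt_def, blockPerm_val, blockPerm_val,
      S_lex (fun l => m (f.symm l)) (by simp) (by simp)]
    simp only [Equiv.apply_eq_iff_eq]
  have hr : (∑ b : Fin (m i), if (b : ℕ) < (j : ℕ) then p i b else 0) + (t : ℕ)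
      < ∑ b, p i b := by
    have hle : (∑ b : Fin (m i), if (b : ℕ) < (j : ℕ) then p i b else 0) + p i j
        ≤ ∑ b, p i b := by
      have heq : (∑ b : Fin (m i), if (b : ℕ) < (j : ℕ) then p i b else 0) + p i j
          = ∑ b : Fin (m i),
              ((if (b : ℕ) < (j : ℕ) then p i b else 0) + (if b = j then p i b else 0)) := by
        rw [Finset.sum_add_distrib, Finset.sum_ite_eq' Finset.univ j (p i)]
        simp
      rw [heq]
      apply Finset.sum_le_sum
      intro b _
      rcases eq_or_ne b j with rfl | hne
      · simp
      · simp only [hne, if_false, add_zero]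
        split <;> simp
    omega
  have hx : (finCongr (sum_flatten p).symm) (finSigmaFinEquiv' ⟨finSigmaFinEquiv' ⟨i, j⟩, t⟩)
      = finSigmaFinEquiv' (k := fun i => ∑ j, p i j)
          ⟨i, ⟨(∑ b : Fin (m i), if (b : ℕ) < (j : ℕ) then p i b else 0) + (t : ℕ), hr⟩⟩ := by
    apply Fin.ext
    simp only [finCongr_apply, Fin.coe_cast]
    rw [finSigmaFinEquiv_val, finSigmaFinEquiv_val,
      sum_sigma_decomp (flatten p) _ (fun a => a < i) i (j : ℕ) (lt_irrefl i)
        (fun a b => by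
          rw [Fin.lt_def, finSigmaFinEquiv_val, finSigmaFinEquiv_val,
            S_lex m b.isLt j.isLt])]
    simp only [hval]
    omega
  apply Fin.ext
  rw [blockPerm_val (flatten p) (blockPerm m f), permCast, Equiv.permCongr_apply,
    finCongr_symm, hx, finCongr_apply, Fin.coe_cast, blockPerm_val]
  have h1 : (∑ y' : Fin (∑ i, m i),
        if y' < blockPerm m f (finSigmaFinEquiv' ⟨i, j⟩)
          then flatten p ((blockPerm m f).symm y') else 0)
      = ∑ y' : Fin (∑ i, m i),
          if blockPerm m f y' < blockPerm m f (finSigmaFinEquiv' ⟨i, j⟩)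
            then flatten p y' else 0 := by
    rw [← Equiv.sum_comp (blockPerm m f)
      (fun y' => if y' < blockPerm m f (finSigmaFinEquiv' ⟨i, j⟩)
        then flatten p ((blockPerm m f).symm y') else 0)]
    exact Finset.sum_congr rfl fun y' _ => by rw [Equiv.symm_apply_apply]
  rw [h1, sum_sigma_decomp (flatten p) _ (fun a => f a < f i) i (j : ℕ)
    (lt_irrefl (f i)) hcondL]
  simp only [hval]
  have h2 : (∑ a, if f a < f i then (∑ b, p a b) else 0)
      = ∑ l, if l < f i then (∑ b, p (f.symm l) b) else 0 := by
    rw [← Equiv.sum_comp f (fun l => if l < f i then (∑ b, p (f.symm l) b) else 0)]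
    exact Finset.sum_congr rfl fun a _ => by rw [Equiv.symm_apply_apply]
  rw [h2]
  omega
end

section
/- Let (Λ, π, β, δ) be an action-operad datum and define μ(g; h_1, …, h_n) := δ_{n;k}(g)·β_k(h_1, …, h_n) ∈ Λ(∑k) for g ∈ Λ(n) and h_i ∈ Λ(k_i). Then μ satisfies the action operad equivariance axiom: for g, g' ∈ Λ(n), k : Fin n → ℕ, f_i' ∈ Λ(k_i), and f_i ∈ Λ(k_{π_n(g')⁻¹(i)}), one has μ(g; f_1, …, f_n) · μ(g'; f_1', …, f_n') = μ(g·g'; f_{π_n(g')(1)}·f_1', …, f_{π_n(g')(n)}·f_n') in Λ(∑k), where μ(g; f_1, …, f_n) ∈ Λ(∑ k∘π_n(g')⁻¹) is regarded in Λ(∑k) via ∑ k∘π_n(g')⁻¹ = ∑ k. -/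
/-- Transport along an equality of indices. -/
def acast {Λ : ℕ → Type*} {a b : ℕ} (h : a = b) (x : Λ a) : Λ b := h ▸ x

/-- An action-operad datum: a family of groups `Λ n` with maps to the symmetric groups,
block sum homomorphisms `β` and block functions `δ`, satisfying the nine axioms of
Theorem 1.9 (charAOp). -/
structure ActionOperadData (Λ : ℕ → Type*) [∀ n, Group (Λ n)] where
  π : ∀ n : ℕ, Λ n →* Equiv.Perm (Fin n)
  β : ∀ (n : ℕ) (k : Fin n → ℕ), ((i : Fin n) → Λ (k i)) →* Λ (∑ i, k i)
  δ : ∀ (n : ℕ) (k : Fin n → ℕ), Λ n → Λ (∑ i, k i)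
  /-- (1) `β` is compatible with the underlying permutations. -/
  ax1 : ∀ (n : ℕ) (k : Fin n → ℕ) (h : (i : Fin n) → Λ (k i)),
    π (∑ i, k i) (β n k h) = blockSum fun i => π (k i) (h i)
  /-- (2) for `n = 1`, `β : Λ(k) → Λ(k)` is the identity. -/
  ax2 : ∀ (k : Fin 1 → ℕ) (h : (i : Fin 1) → Λ (k i)),
    β 1 k h = acast (Fin.sum_univ_one k).symm (h 0)
  /-- (3) `β` applied to a family of `β`'s is `β` of the flattened family. -/
  ax3 : ∀ (n : ℕ) (k : Fin n → ℕ) (m : (i : Fin n) → Fin (k i) → ℕ)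
      (h : (i : Fin n) → (j : Fin (k i)) → Λ (m i j)),
    acast (sum_flatten m) (β n (fun i => ∑ j, m i j) (fun i => β (k i) (m i) (h i))) =
      β (∑ i, k i) (flatten m)
        (fun y => h (finSigmaFinEquiv'.symm y).1 (finSigmaFinEquiv'.symm y).2)
  /-- (4) `δ` is compatible with the underlying permutations. -/
  ax4 : ∀ (n : ℕ) (k : Fin n → ℕ) (g : Λ n),
    π (∑ i, k i) (δ n k g) = blockPerm k (π n g)
  /-- (5) `δ_{n;(1,…,1)}` and `δ_{1;(n)}` are the identity. -/
  ax5a : ∀ (n : ℕ) (g : Λ n), δ n (fun _ => 1) g = acast (by simp) g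
  ax5b : ∀ n : ℕ, δ 1 (fun _ => n) 1 = 1
  /-- (6) twisted multiplicativity of `δ`. -/
  ax6 : ∀ (n : ℕ) (k j : Fin n → ℕ) (g h : Λ n)
      (hmatch : ∀ i, k i = j ((π n h)⁻¹ i)),
    acast ((Finset.sum_congr rfl fun i _ => hmatch i).trans
        (Equiv.sum_comp (π n h)⁻¹ j)) (δ n k g) * δ n j h = δ n j (g * h)
  /-- (7) associativity of `δ`. -/
  ax7 : ∀ (n : ℕ) (m : Fin n → ℕ) (p : (i : Fin n) → Fin (m i) → ℕ) (f : Λ n),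
    δ (∑ i, m i) (flatten p) (δ n m f) = acast (sum_flatten p) (δ n (fun i => ∑ j, p i j) f)
  /-- (8) commutation of `δ` past `β`. -/
  ax8 : ∀ (n : ℕ) (k : Fin n → ℕ) (g : Λ n) (h : (i : Fin n) → Λ (k i)),
    δ n k g * β n k h =
      acast (Equiv.sum_comp (π n g)⁻¹ k)
          (β n (fun i => k ((π n g)⁻¹ i)) (fun i => h ((π n g)⁻¹ i))) * δ n k g
  /-- (9) interchange of `β` and `δ`. -/
  ax9 : ∀ (n : ℕ) (k : Fin n → ℕ) (m : (i : Fin n) → Fin (k i) → ℕ)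
      (g : (i : Fin n) → Λ (k i)),
    acast (sum_flatten m) (β n (fun i => ∑ j, m i j) (fun i => δ (k i) (m i) (g i))) =
      δ (∑ i, k i) (flatten m) (β n k g)

theorem acast_mul {Λ : ℕ → Type*} [∀ n, Group (Λ n)] {a b : ℕ} (h : a = b) (x y : Λ a) :
    acast h (x * y) = acast h x * acast h y := by subst h; rfl

theorem acast_congr {α : Sort*} {Λ : ℕ → Type*} {K : α → ℕ} (F : ∀ a, Λ (K a)) {a b : α}
    (e : a = b) (e' : K a = K b) : acast e' (F a) = F b := by subst e; rfl

/-- The multiplication `μ(g; h₁, …, h_n) := δ_{n;k}(g)·β_k(h₁, …, h_n)` associated to an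
action-operad datum satisfies the action operad equivariance axiom
`μ(g; f₁, …, f_n)·μ(g'; f₁', …, f_n') = μ(gg'; f_{π(g')(1)}f₁', …, f_{π(g')(n)}f_n')`. -/
theorem mu_equivariance {Λ : ℕ → Type*} [∀ n, Group (Λ n)] (D : ActionOperadData Λ)
    (n : ℕ) (k : Fin n → ℕ) (g g' : Λ n)
    (f : (i : Fin n) → Λ (k ((D.π n g')⁻¹ i))) (f' : (i : Fin n) → Λ (k i)) :
    acast (Equiv.sum_comp (D.π n g')⁻¹ k)
        (D.δ n (fun i => k ((D.π n g')⁻¹ i)) g *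
          D.β n (fun i => k ((D.π n g')⁻¹ i)) f) *
      (D.δ n k g' * D.β n k f') =
    D.δ n k (g * g') *
      D.β n k (fun i =>
        acast (congrArg k (show (D.π n g')⁻¹ (D.π n g' i) = i from (D.π n g').symm_apply_apply i)) (f (D.π n g' i)) * f' i) := by
  have hfh' : (fun i => (fun i => acast (congrArg k ((show (D.π n g')⁻¹ (D.π n g' i) = i from (D.π n g').symm_apply_apply i)))
        (f (D.π n g' i))) ((D.π n g')⁻¹ i)) = f := by
    funext i
    exact acast_congr (K := fun x => k ((D.π n g')⁻¹ x)) f (show D.π n g' ((D.π n g')⁻¹ i) = i from (D.π n g').apply_symm_apply i) _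
  have step8 :
      acast (Equiv.sum_comp (D.π n g')⁻¹ k) (D.β n (fun i => k ((D.π n g')⁻¹ i)) f) *
          D.δ n k g' =
        D.δ n k g' * D.β n k (fun i => acast (congrArg k ((show (D.π n g')⁻¹ (D.π n g' i) = i from (D.π n g').symm_apply_apply i)))
          (f (D.π n g' i))) := by
    conv_lhs => rw [← hfh']
    exact (D.ax8 n k g' (fun i => acast (congrArg k ((show (D.π n g')⁻¹ (D.π n g' i) = i from (D.π n g').symm_apply_apply i)))
      (f (D.π n g' i)))).symm
  have step6 :
      acast (Equiv.sum_comp (D.π n g')⁻¹ k) (D.δ n (fun i => k ((D.π n g')⁻¹ i)) g) *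
          D.δ n k g' = D.δ n k (g * g') :=
    D.ax6 n (fun i => k ((D.π n g')⁻¹ i)) k g g' (fun i => rfl)
  rw [acast_mul, mul_assoc, ← mul_assoc _ (D.δ n k g'), step8, ← mul_assoc, ← mul_assoc,
    step6, mul_assoc, ← map_mul]
  rfl
end
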